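/- Let (A, B) be a two-player weighted potential game with potential φ and weights w₁ = w₂ = 1 (an exact potential game), and let (x, y) be a trajectory of the two-player SQL dynamics for parameters α₁, α₂ ∈ [0,1), β₁, β₂ > 0. Define r^H_{1,i}(t) := β₁ (A y(t))_i − α₁(ln x_i(t) + 1) and r^H_{2,j}(t) := β₂ (x(t)ᵀ B)_j − α₂(ln y_j(t) + 1), and the modified potential Φ^H(x,y) := ∑_{i,j} φ_{ij} x_i y_j + (α₁/β₁) H(x) + (α₂/β₂) H(y) with H(z) = −∑_l z_l ln z_l. Then for every t ≥ 0, d/dt Φ^H(x(t), y(t)) = (1/β₁)·[∑_i x_i(t) (r^H_{1,i}(t))² − (∑_i x_i(t) r^H_{1,i}(t))²] + (1/β₂)·[∑_j y_j(t) (r^H_{2,j}(t))² − (∑_j y_j(t) r^H_{2,j}(t))²]. -/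

import Mathlib

open Filter Real

private lemma one_player {ι : Type*} [Fintype ι] (β α c d : ℝ) (hβ : β ≠ 0)
    (x u a r : ι → ℝ) (hx : ∑ i, x i = 1)
    (hc : c = ∑ k, x k * a k) (hd : d = ∑ k, x k * Real.log (x k))
    (hr : ∀ i, r i = β * a i - α * (Real.log (x i) + 1))
    (hu : ∀ i, u i = x i * (β * (a i - c) - α * (Real.log (x i) - d))) :
    (∑ i, u i = 0) ∧
    (∑ i, u i * a i) - α / β * (∑ i, (u i * Real.log (x i) + u i))
      = 1 / β * ((∑ i, x i * r i ^ 2) - (∑ i, x i * r i) ^ 2) := by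
  have hrbar : ∑ k, x k * r k = β * c - α * d - α := by
    have e : ∀ k, x k * r k = β * (x k * a k) - α * (x k * Real.log (x k)) - α * x k := by
      intro k; rw [hr k]; ring
    simp only [e, Finset.sum_sub_distrib, ← Finset.mul_sum, hx, mul_one, ← hc, ← hd]
  have hur : ∀ i, u i = x i * (r i - ∑ k, x k * r k) := by
    intro i; rw [hu i, hrbar, hr i]; ring
  constructor
  · simp only [hur, mul_sub, Finset.sum_sub_distrib, ← Finset.sum_mul, hx, one_mul, sub_self]
  · have key1 : ∑ i, u i * r i = (∑ i, x i * r i ^ 2) - (∑ i, x i * r i) ^ 2 := by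
      have e : ∀ i, u i * r i = x i * r i ^ 2 - (x i * r i) * (∑ k, x k * r k) := by
        intro i; rw [hur i]; ring
      simp only [e, Finset.sum_sub_distrib, ← Finset.sum_mul]
      ring
    have key2 : ∑ i, u i * r i
        = β * (∑ i, u i * a i) - α * (∑ i, (u i * Real.log (x i) + u i)) := by
      have e : ∀ i, u i * r i = β * (u i * a i) - α * (u i * Real.log (x i) + u i) := by
        intro i; rw [hr i]; ring
      simp only [e, Finset.sum_sub_distrib, ← Finset.mul_sum]
    field_simp
    have hlg : ∑ i, (u i * Real.log (x i) + u i) = ∑ i, u i * (Real.log (x i) + 1) :=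
      Finset.sum_congr rfl fun i _ => by ring
    linear_combination key1 - key2 + α * hlg

theorem sql_modified_potential_derivative_variance
    {ι₁ ι₂ : Type*} [Fintype ι₁] [Fintype ι₂] [Nonempty ι₁] [Nonempty ι₂]
    (A B φ : ι₁ → ι₂ → ℝ)
    (hpotA : ∀ i i' j, A i j - A i' j = 1 * (φ i j - φ i' j))
    (hpotB : ∀ i j j', B i j - B i j' = 1 * (φ i j - φ i j'))
    (α₁ α₂ β₁ β₂ : ℝ)
    (hα₁₀ : 0 ≤ α₁) (hα₁₁ : α₁ < 1) (hα₂₀ : 0 ≤ α₂) (hα₂₁ : α₂ < 1)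
    (hβ₁ : 0 < β₁) (hβ₂ : 0 < β₂)
    (x : ℝ → ι₁ → ℝ) (y : ℝ → ι₂ → ℝ)
    (hxdiff : ∀ i, Differentiable ℝ fun t => x t i)
    (hydiff : ∀ j, Differentiable ℝ fun t => y t j)
    (hxpos : ∀ t ≥ (0 : ℝ), ∀ i, 0 < x t i)
    (hypos : ∀ t ≥ (0 : ℝ), ∀ j, 0 < y t j)
    (hxsum : ∀ t ≥ (0 : ℝ), ∑ i, x t i = 1)
    (hysum : ∀ t ≥ (0 : ℝ), ∑ j, y t j = 1)
    (hodex : ∀ t ≥ (0 : ℝ), ∀ i, deriv (fun s => x s i) t =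
      x t i * (β₁ * ((∑ j, A i j * y t j) - ∑ i', ∑ j, x t i' * A i' j * y t j)
        - α₁ * (Real.log (x t i) - ∑ i', x t i' * Real.log (x t i'))))
    (hodey : ∀ t ≥ (0 : ℝ), ∀ j, deriv (fun s => y s j) t =
      y t j * (β₂ * ((∑ i, x t i * B i j) - ∑ i, ∑ j', x t i * B i j' * y t j')
        - α₂ * (Real.log (y t j) - ∑ j', y t j' * Real.log (y t j')))) :
    ∀ t ≥ (0 : ℝ),
      HasDerivAt (fun s =>
        (∑ i, ∑ j, φ i j * x s i * y s j)
          + (α₁ / β₁) * (-∑ i, x s i * Real.log (x s i))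
          + (α₂ / β₂) * (-∑ j, y s j * Real.log (y s j)))
        ((1 / β₁) *
          ((∑ i, x t i * (β₁ * (∑ j, A i j * y t j) - α₁ * (Real.log (x t i) + 1)) ^ 2)
            - (∑ i, x t i * (β₁ * (∑ j, A i j * y t j) - α₁ * (Real.log (x t i) + 1))) ^ 2)
          + (1 / β₂) *
            ((∑ j, y t j * (β₂ * (∑ i, x t i * B i j) - α₂ * (Real.log (y t j) + 1)) ^ 2)
              - (∑ j, y t j * (β₂ * (∑ i, x t i * B i j) - α₂ * (Real.log (y t j) + 1))) ^ 2))
        t := by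
  intro t ht
  classical
  have hx : ∀ i, HasDerivAt (fun s => x s i) (deriv (fun s => x s i) t) t :=
    fun i => ((hxdiff i) t).hasDerivAt
  have hy : ∀ j, HasDerivAt (fun s => y s j) (deriv (fun s => y s j) t) t :=
    fun j => ((hydiff j) t).hasDerivAt
  -- derivative of the bilinear potential part
  have h1 : HasDerivAt (fun s => ∑ i, ∑ j, φ i j * x s i * y s j)
      (∑ i, ∑ j, (φ i j * deriv (fun s => x s i) t * y t j
        + φ i j * x t i * deriv (fun s => y s j) t)) t := by
    refine HasDerivAt.fun_sum fun i _ => HasDerivAt.fun_sum fun j _ => ?_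
    exact ((hx i).const_mul (φ i j)).mul (hy j)
  -- derivative of the entropy parts
  have hlogx : ∀ i, HasDerivAt (fun s => x s i * Real.log (x s i))
      (deriv (fun s => x s i) t * Real.log (x t i) + deriv (fun s => x s i) t) t := by
    intro i
    have hne := (hxpos t ht i).ne'
    have h := (hx i).mul ((hx i).log hne)
    have e : x t i * (deriv (fun s => x s i) t / x t i) = deriv (fun s => x s i) t := by
      field_simp
    rwa [e] at h
  have hlogy : ∀ j, HasDerivAt (fun s => y s j * Real.log (y s j))
      (deriv (fun s => y s j) t * Real.log (y t j) + deriv (fun s => y s j) t) t := by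
    intro j
    have hne := (hypos t ht j).ne'
    have h := (hy j).mul ((hy j).log hne)
    have e : y t j * (deriv (fun s => y s j) t / y t j) = deriv (fun s => y s j) t := by
      field_simp
    rwa [e] at h
  have h2 : HasDerivAt (fun s => (α₁ / β₁) * (-∑ i, x s i * Real.log (x s i)))
      ((α₁ / β₁) * (-∑ i, (deriv (fun s => x s i) t * Real.log (x t i)
        + deriv (fun s => x s i) t))) t :=
    ((HasDerivAt.fun_sum fun i _ => hlogx i).neg).const_mul (α₁ / β₁)
  have h3 : HasDerivAt (fun s => (α₂ / β₂) * (-∑ j, y s j * Real.log (y s j)))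
      ((α₂ / β₂) * (-∑ j, (deriv (fun s => y s j) t * Real.log (y t j)
        + deriv (fun s => y s j) t))) t :=
    ((HasDerivAt.fun_sum fun j _ => hlogy j).neg).const_mul (α₂ / β₂)
  have hD := (h1.add h2).add h3
  -- algebraic identity between the two derivative expressions
  have hc₁ : (∑ i', ∑ j, x t i' * A i' j * y t j) = ∑ k, x t k * ∑ j, A k j * y t j := by
    refine Finset.sum_congr rfl fun i _ => ?_
    rw [Finset.mul_sum]
    exact Finset.sum_congr rfl fun j _ => by ring
  have hc₂ : (∑ i, ∑ j', x t i * B i j' * y t j') = ∑ k, y t k * ∑ i, x t i * B i k := by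
    rw [Finset.sum_comm]
    refine Finset.sum_congr rfl fun j _ => ?_
    rw [Finset.mul_sum]
    exact Finset.sum_congr rfl fun i _ => by ring
  have hp1 := one_player β₁ α₁ _ _ hβ₁.ne' (x t) (fun i => deriv (fun s => x s i) t)
    (fun i => ∑ j, A i j * y t j)
    (fun i => β₁ * (∑ j, A i j * y t j) - α₁ * (Real.log (x t i) + 1))
    (hxsum t ht) hc₁ rfl (fun i => rfl) (hodex t ht)
  have hp2 := one_player β₂ α₂ _ _ hβ₂.ne' (y t) (fun j => deriv (fun s => y s j) t)
    (fun j => ∑ i, x t i * B i j)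
    (fun j => β₂ * (∑ i, x t i * B i j) - α₂ * (Real.log (y t j) + 1))
    (hysum t ht) hc₂ rfl (fun j => rfl) (hodey t ht)
  have hsumu : ∑ i, deriv (fun s => x s i) t = 0 := hp1.1
  have hsumv : ∑ j, deriv (fun s => y s j) t = 0 := hp2.1
  have h1eq : (∑ i, deriv (fun s => x s i) t * (∑ j, A i j * y t j))
      - α₁ / β₁ * (∑ i, (deriv (fun s => x s i) t * Real.log (x t i)
        + deriv (fun s => x s i) t))
      = 1 / β₁ * ((∑ i, x t i * (β₁ * (∑ j, A i j * y t j)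
            - α₁ * (Real.log (x t i) + 1)) ^ 2)
          - (∑ i, x t i * (β₁ * (∑ j, A i j * y t j)
            - α₁ * (Real.log (x t i) + 1))) ^ 2) := hp1.2
  have h2eq : (∑ j, deriv (fun s => y s j) t * (∑ i, x t i * B i j))
      - α₂ / β₂ * (∑ j, (deriv (fun s => y s j) t * Real.log (y t j)
        + deriv (fun s => y s j) t))
      = 1 / β₂ * ((∑ j, y t j * (β₂ * (∑ i, x t i * B i j)
            - α₂ * (Real.log (y t j) + 1)) ^ 2)
          - (∑ j, y t j * (β₂ * (∑ i, x t i * B i j)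
            - α₂ * (Real.log (y t j) + 1))) ^ 2) := hp2.2
  -- the cross (bilinear) term
  obtain ⟨i₀⟩ := ‹Nonempty ι₁›
  obtain ⟨j₀⟩ := ‹Nonempty ι₂›
  have t1 : ∑ i, ∑ j, φ i j * deriv (fun s => x s i) t * y t j
      = ∑ i, deriv (fun s => x s i) t * (∑ j, A i j * y t j) := by
    have e : ∀ i, ∑ j, φ i j * deriv (fun s => x s i) t * y t j
        = deriv (fun s => x s i) t * (∑ j, A i j * y t j)
          - deriv (fun s => x s i) t * (∑ j, (A i₀ j - φ i₀ j) * y t j) := by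
      intro i
      rw [Finset.mul_sum, Finset.mul_sum, ← Finset.sum_sub_distrib]
      refine Finset.sum_congr rfl fun j _ => ?_
      linear_combination (-(deriv (fun s => x s i) t * y t j)) * hpotA i i₀ j
    simp only [e]
    rw [Finset.sum_sub_distrib, ← Finset.sum_mul, hsumu, zero_mul, sub_zero]
  have t2 : ∑ i, ∑ j, φ i j * x t i * deriv (fun s => y s j) t
      = ∑ j, deriv (fun s => y s j) t * (∑ i, x t i * B i j) := by
    rw [Finset.sum_comm]
    have e : ∀ j, ∑ i, φ i j * x t i * deriv (fun s => y s j) t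
        = deriv (fun s => y s j) t * (∑ i, x t i * B i j)
          - deriv (fun s => y s j) t * (∑ i, x t i * (B i j₀ - φ i j₀)) := by
      intro j
      rw [Finset.mul_sum, Finset.mul_sum, ← Finset.sum_sub_distrib]
      refine Finset.sum_congr rfl fun i _ => ?_
      linear_combination (-(deriv (fun s => y s j) t * x t i)) * hpotB i j j₀
    simp only [e]
    rw [Finset.sum_sub_distrib, ← Finset.sum_mul, hsumv, zero_mul, sub_zero]
  have hcross : ∑ i, ∑ j, (φ i j * deriv (fun s => x s i) t * y t j
        + φ i j * x t i * deriv (fun s => y s j) t)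
      = (∑ i, deriv (fun s => x s i) t * (∑ j, A i j * y t j))
        + (∑ j, deriv (fun s => y s j) t * (∑ i, x t i * B i j)) := by
    simp only [Finset.sum_add_distrib]
    rw [t1, t2]
  have key : (∑ i, ∑ j, (φ i j * deriv (fun s => x s i) t * y t j
        + φ i j * x t i * deriv (fun s => y s j) t))
      + (α₁ / β₁) * (-∑ i, (deriv (fun s => x s i) t * Real.log (x t i)
        + deriv (fun s => x s i) t))
      + (α₂ / β₂) * (-∑ j, (deriv (fun s => y s j) t * Real.log (y t j)
        + deriv (fun s => y s j) t))
      = (1 / β₁) *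
          ((∑ i, x t i * (β₁ * (∑ j, A i j * y t j) - α₁ * (Real.log (x t i) + 1)) ^ 2)
            - (∑ i, x t i * (β₁ * (∑ j, A i j * y t j) - α₁ * (Real.log (x t i) + 1))) ^ 2)
          + (1 / β₂) *
            ((∑ j, y t j * (β₂ * (∑ i, x t i * B i j) - α₂ * (Real.log (y t j) + 1)) ^ 2)
              - (∑ j, y t j * (β₂ * (∑ i, x t i * B i j)
                - α₂ * (Real.log (y t j) + 1))) ^ 2) := by
    linear_combination hcross + h1eq + h2eq
  exact key ▸ hD
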